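/- Let a ≤ b ≤ c be real and λ_− = (a+b+c)/3 − (√2/3)·√(3(a²+b²+c²) − (a+b+c)²). If a + b ≥ 0 (nonnegative Ricci curvature), then λ_− + a + b + c ≥ 0, i.e., the curvature operator of the second kind is four-nonnegative. -/
import Mathlib

theorem stmt8 (a b c : ℝ) (hab : a ≤ b) (hbc : b ≤ c) (h : a + b ≥ 0) :
    ((a + b + c) / 3 - Real.sqrt 2 / 3 * Real.sqrt (3 * (a^2 + b^2 + c^2) - (a + b + c)^2))
      + a + b + c ≥ 0 := by
  have hs : 0 ≤ a + b + c := by nlinarith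
  have key : Real.sqrt 2 * Real.sqrt (3 * (a^2 + b^2 + c^2) - (a + b + c)^2)
      ≤ 4 * (a + b + c) := by
    rw [← Real.sqrt_mul (by norm_num)]
    calc Real.sqrt (2 * (3 * (a^2 + b^2 + c^2) - (a + b + c)^2))
        ≤ Real.sqrt ((4 * (a + b + c))^2) := by
          apply Real.sqrt_le_sqrt; nlinarith [sq_nonneg (a+b), sq_nonneg (b+c), sq_nonneg (a+c), sq_nonneg (a-b), sq_nonneg (b-c)]
      _ = 4 * (a + b + c) := Real.sqrt_sq (by linarith)
  linarith
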